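/- arXiv:2011.09310 — 3 statements merged into one kernel-verified Lean document; each statement's English description precedes it below -/
import Mathlib

section
/- Let (K,ν) be a henselian valued field with char K = p > 0 that admits a nontrivial maximal purely wild extension (W|K,ν) such that W|K is separable. Then K is perfect, and consequently an algebraic extension of (K,ν) is a maximal purely wild extension if and only if it is a maximal immediate algebraic extension. -/
open Polynomial IntermediateField

namespace ValWild

variable {K Ω Γ₀ : Type*} [Field K] [Field Ω] [Algebra K Ω]
  [LinearOrderedCommGroupWithZero Γ₀]

/-- `γ` lies in the value group of the subextension `B` (w.r.t. the ambient valuation `w`). -/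
def IsValueOn (w : Valuation Ω Γ₀) (B : IntermediateField K Ω) (γ : Γ₀) : Prop :=
  ∃ y ∈ B, y ≠ 0 ∧ w y = γ

/-- The residue of `x` lies in the residue field of `B`. -/
def ResidueInOn (w : Valuation Ω Γ₀) (B : IntermediateField K Ω) (x : Ω) : Prop :=
  ∃ y ∈ B, w y ≤ 1 ∧ w (x - y) < 1

/-- `x` is algebraic over `B`. -/
def AlgOver (B : IntermediateField K Ω) (x : Ω) : Prop :=
  ∃ f : Polynomial Ω, f.Monic ∧ (∀ i, f.coeff i ∈ B) ∧ f.eval x = 0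

/-- `(L|B,w)` is an immediate extension: same value group and same residue field. -/
structure Immediate (w : Valuation Ω Γ₀) (B L : IntermediateField K Ω) : Prop where
  le : B ≤ L
  val : ∀ x ∈ L, x ≠ 0 → IsValueOn w B (w x)
  res : ∀ x ∈ L, w x ≤ 1 → ResidueInOn w B x

/-- `(L|B,w)` is a purely wild algebraic extension: the value group extension is a `p`-group
and the residue field extension is purely inseparable. -/
structure PurelyWild (w : Valuation Ω Γ₀) (p : ℕ) (B L : IntermediateField K Ω) : Prop where
  le : B ≤ L
  alg : ∀ x ∈ L, AlgOver B x
  val : ∀ x ∈ L, x ≠ 0 → ∃ k : ℕ, IsValueOn w B (w x ^ p ^ k)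
  res : ∀ x ∈ L, w x ≤ 1 → ∃ k : ℕ, ResidueInOn w B (x ^ p ^ k)

/-- a maximal purely wild extension of `B` (inside the ambient field). -/
def MaxPurelyWild (w : Valuation Ω Γ₀) (p : ℕ) (B W : IntermediateField K Ω) : Prop :=
  PurelyWild w p B W ∧ ∀ W', PurelyWild w p B W' → W ≤ W' → W' = W

/-- an immediate algebraic extension. -/
def ImmediateAlg (w : Valuation Ω Γ₀) (B L : IntermediateField K Ω) : Prop :=
  Immediate w B L ∧ ∀ x ∈ L, AlgOver B x

/-- a maximal immediate algebraic extension of `B`. -/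
def MaxImmediateAlg (w : Valuation Ω Γ₀) (B W : IntermediateField K Ω) : Prop :=
  ImmediateAlg w B W ∧ ∀ W', ImmediateAlg w B W' → W ≤ W' → W' = W

/-- `W` and `W'` are isomorphic over `B` via a valuation-preserving isomorphism. -/
def IsoOver (w : Valuation Ω Γ₀) (B W W' : IntermediateField K Ω) : Prop :=
  ∃ σ : W ≃+* W', (∀ (x : Ω) (hx : x ∈ W), x ∈ B → (σ ⟨x, hx⟩ : Ω) = x) ∧
    ∀ y : W, w (σ y : Ω) = w (y : Ω)

/-- `B` admits a unique maximal purely wild extension (any two are isomorphic over `B`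
by a valuation-preserving isomorphism). -/
def UniqueMaxPurelyWild (w : Valuation Ω Γ₀) (p : ℕ) (B : IntermediateField K Ω) : Prop :=
  ∀ W W', MaxPurelyWild w p B W → MaxPurelyWild w p B W' → IsoOver w B W W'

/-- `B` admits a unique maximal immediate algebraic extension. -/
def UniqueMaxImmediateAlg (w : Valuation Ω Γ₀) (B : IntermediateField K Ω) : Prop :=
  ∀ W W', MaxImmediateAlg w B W → MaxImmediateAlg w B W' → IsoOver w B W W'

/-- `(B, w)` is a henselian valued field: its valuation ring is a henselian local ring
(equivalently, `w` extends uniquely to every algebraic extension of `B`). -/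
def IsHenselianVF (w : Valuation Ω Γ₀) (B : IntermediateField K Ω) : Prop :=
  HenselianLocalRing (w.comap (algebraMap B Ω)).integer

/-- `[L : B] = m`, witnessed by a basis. -/
def FieldDeg (B L : IntermediateField K Ω) (m : ℕ) : Prop :=
  ∃ b : Fin m → Ω, (∀ i, b i ∈ L) ∧
    (∀ y ∈ L, ∃ c : Fin m → Ω, (∀ i, c i ∈ B) ∧ y = ∑ i, c i * b i) ∧
    (∀ c : Fin m → Ω, (∀ i, c i ∈ B) → ∑ i, c i * b i = 0 → ∀ i, c i = 0)

/-- `[wL : wB] = e`, witnessed by a complete system of coset representatives. -/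
def ValueIndex (w : Valuation Ω Γ₀) (B L : IntermediateField K Ω) (e : ℕ) : Prop :=
  ∃ z : Fin e → Ω, (∀ i, z i ∈ L ∧ z i ≠ 0) ∧
    (∀ x ∈ L, x ≠ 0 → ∃ i, ∃ y ∈ B, y ≠ 0 ∧ w x = w (z i) * w y) ∧
    (∀ i j : Fin e, i ≠ j → ¬ ∃ y ∈ B, y ≠ 0 ∧ w (z i) = w (z j) * w y)

/-- `[Lw : Bw] = d`, witnessed by elements of the valuation ring of `L` whose residues
form a basis of the residue field of `L` over that of `B`. -/
def ResidueDeg (w : Valuation Ω Γ₀) (B L : IntermediateField K Ω) (d : ℕ) : Prop :=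
  ∃ x : Fin d → Ω, (∀ i, x i ∈ L ∧ w (x i) ≤ 1) ∧
    (∀ y ∈ L, w y ≤ 1 → ∃ c : Fin d → Ω, (∀ i, c i ∈ B ∧ w (c i) ≤ 1) ∧
      w (y - ∑ i, c i * x i) < 1) ∧
    (∀ c : Fin d → Ω, (∀ i, c i ∈ B ∧ w (c i) ≤ 1) →
      w (∑ i, c i * x i) < 1 → ∀ i, w (c i) < 1)

/-- the finite extension `(L|B,w)` is defectless: `[L:B] = [wL:wB]·[Lw:Bw]`. -/
def Defectless (w : Valuation Ω Γ₀) (B L : IntermediateField K Ω) : Prop :=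
  ∃ e d m : ℕ, ValueIndex w B L e ∧ ResidueDeg w B L d ∧ FieldDeg B L m ∧ m = e * d

/-- the residue of `x` is separable algebraic over the residue field of `B`:
it is a simple root of a polynomial with coefficients in the residue field of `B`. -/
def ResidueSepAt (w : Valuation Ω Γ₀) (B : IntermediateField K Ω) (x : Ω) : Prop :=
  ∃ (n : ℕ) (a : Fin (n + 1) → Ω), (∀ i, a i ∈ B ∧ w (a i) ≤ 1) ∧
    w (∑ i : Fin (n + 1), a i * x ^ (i : ℕ)) < 1 ∧
    w (∑ i : Fin (n + 1), ((i : ℕ) : Ω) * a i * x ^ ((i : ℕ) - 1)) = 1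

/-- the residue field extension of `(L|B,w)` is separable. -/
def ResidueSep (w : Valuation Ω Γ₀) (B L : IntermediateField K Ω) : Prop :=
  ∀ x ∈ L, w x ≤ 1 → ResidueSepAt w B x

/-- `(L|B,w)` is unramified: same value group and separable residue field extension. -/
def Unramified (w : Valuation Ω Γ₀) (B L : IntermediateField K Ω) : Prop :=
  B ≤ L ∧ (∀ x ∈ L, AlgOver B x) ∧ (∀ x ∈ L, x ≠ 0 → IsValueOn w B (w x)) ∧
    ResidueSep w B L

/-- `(L|B,w)` is a tame extension (`p` the residue characteristic): every finite
subextension `E'` has value-group index prime to `p`, separable residue field extension,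
and is defectless. -/
def Tame (w : Valuation Ω Γ₀) (p : ℕ) (B L : IntermediateField K Ω) : Prop :=
  B ≤ L ∧ (∀ x ∈ L, AlgOver B x) ∧
  ∀ E' : IntermediateField K Ω, B ≤ E' → E' ≤ L → (∃ m : ℕ, FieldDeg B E' m) →
    (∃ e : ℕ, ValueIndex w B E' e ∧ ¬ (p ∣ e)) ∧ ResidueSep w B E' ∧ Defectless w B E'

/-- `L` and `F` are linearly disjoint over `B`: every finite `B`-linearly independent
family in `L` remains linearly independent over `F`. -/
def LinDisj (B L F : IntermediateField K Ω) : Prop :=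
  ∀ (m : ℕ) (x : Fin m → Ω), (∀ i, x i ∈ L) →
    (∀ c : Fin m → Ω, (∀ i, c i ∈ B) → ∑ i, c i * x i = 0 → ∀ i, c i = 0) →
    (∀ c : Fin m → Ω, (∀ i, c i ∈ F) → ∑ i, c i * x i = 0 → ∀ i, c i = 0)

/-- the residue field extension of `(L|B,w)` is an Artin-Schreier extension, generated by
the residue of `x`, an Artin-Schreier generator over the residue field of `B`. -/
def ResidueASExt (w : Valuation Ω Γ₀) (p : ℕ) (B L : IntermediateField K Ω) : Prop :=
  ∃ x ∈ L, w x ≤ 1 ∧ (∃ t ∈ B, w t ≤ 1 ∧ w (x ^ p - x - t) < 1) ∧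
    ¬ ResidueInOn w B x ∧
    ∀ y ∈ L, w y ≤ 1 → ∃ (m : ℕ) (cfs : Fin (m + 1) → Ω),
      (∀ i, cfs i ∈ B ∧ w (cfs i) ≤ 1) ∧ w (y - ∑ i : Fin (m + 1), cfs i * x ^ (i : ℕ)) < 1

/-- the residue field of `B` is Artin-Schreier closed. -/
def ResidueASClosed (w : Valuation Ω Γ₀) (p : ℕ) (B : IntermediateField K Ω) : Prop :=
  ∀ t ∈ B, w t ≤ 1 → ∃ y ∈ B, w y ≤ 1 ∧ w (y ^ p - y - t) < 1

end ValWild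

open ValWild Polynomial IntermediateField

section Aux

variable {K Ω Γ₀ : Type*} [Field K] [Field Ω] [Algebra K Ω]
  [LinearOrderedCommGroupWithZero Γ₀]

private lemma aux_pow_eq_cancel {a b : Γ₀} {n : ℕ} (hn : n ≠ 0) (h : a ^ n = b ^ n) : a = b :=
  (pow_left_inj₀ zero_le' zero_le' hn).mp h

private lemma aux_le_one_of_pow {a : Γ₀} {n : ℕ} (hn : n ≠ 0) (h : a ^ n ≤ 1) : a ≤ 1 := by
  have := pow_le_pow_iff_left₀ (a := a) (b := 1) zero_le' zero_le' hn
  rw [one_pow] at this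
  exact this.mp h

private lemma aux_lt_one_of_pow {a : Γ₀} {n : ℕ} (hn : n ≠ 0) (h : a ^ n < 1) : a < 1 := by
  have := pow_lt_pow_iff_left₀ (a := a) (b := 1) zero_le' zero_le' hn
  rw [one_pow] at this
  exact this.mp h

private lemma aux_algOver [IsAlgClosure K Ω] (x : Ω) :
    AlgOver (⊥ : IntermediateField K Ω) x := by
  haveI := IsAlgClosure.isAlgebraic (R := K) (K := Ω)
  have hint : IsIntegral K x := Algebra.IsIntegral.isIntegral x
  refine ⟨(minpoly K x).map (algebraMap K Ω), (minpoly.monic hint).map _, fun i => ?_, ?_⟩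
  · rw [Polynomial.coeff_map]
    exact IntermediateField.mem_bot.mpr ⟨_, rfl⟩
  · rw [Polynomial.eval_map, ← Polynomial.aeval_def, minpoly.aeval]

private lemma aux_sep_root [IsAlgClosure K Ω] (p : ℕ) (hp : p.Prime) [CharP K p]
    (β : Ω) (a : K) (hβ : β ^ p = algebraMap K Ω a) (hs : IsSeparable K β) :
    ∃ b : K, b ^ p = a := by
  haveI := Fact.mk hp
  haveI : CharP Ω p := charP_of_injective_algebraMap (algebraMap K Ω).injective p
  haveI := IsAlgClosure.isAlgebraic (R := K) (K := Ω)
  have hint : IsIntegral K β := Algebra.IsIntegral.isIntegral β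
  have hdvd : minpoly K β ∣ (X ^ p - C a) := by
    apply minpoly.dvd
    simp [hβ]
  have hmap : (minpoly K β).map (algebraMap K Ω) ∣ (X - C β) ^ p := by
    have := Polynomial.map_dvd (algebraMap K Ω) hdvd
    rwa [Polynomial.map_sub, Polynomial.map_pow, map_X, map_C, ← hβ, C_pow,
      ← sub_pow_char] at this
  have hsq : Squarefree ((minpoly K β).map (algebraMap K Ω)) := (Polynomial.Separable.map hs).squarefree
  have hdvd1 : (minpoly K β).map (algebraMap K Ω) ∣ (X - C β) :=
    (hsq.dvd_pow_iff_dvd hp.ne_zero).mp hmap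
  have hdeg : (minpoly K β).natDegree = 1 := by
    have h1 : ((minpoly K β).map (algebraMap K Ω)).natDegree ≤ 1 := by
      have := Polynomial.natDegree_le_of_dvd hdvd1 (X_sub_C_ne_zero β)
      simpa [natDegree_X_sub_C] using this
    rw [natDegree_map] at h1
    have h2 := minpoly.natDegree_pos hint
    omega
  obtain ⟨b, hb⟩ := minpoly.natDegree_eq_one_iff.mp hdeg
  exact ⟨b, (algebraMap K Ω).injective (by rw [map_pow, hb, hβ])⟩

end Aux


/-- (Proposition: if a henselian field of characteristic `p` has a
nontrivial separable maximal purely wild extension, then it is perfect and maximal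
purely wild extensions coincide with maximal immediate algebraic extensions). -/
theorem perfect_of_separable_maximal_purely_wild
    {K Ω Γ₀ : Type*} [Field K] [Field Ω] [Algebra K Ω] [IsAlgClosure K Ω]
    [LinearOrderedCommGroupWithZero Γ₀]
    (w : Valuation Ω Γ₀) (p : ℕ) (hp : p.Prime) [CharP K p]
    (hhens : IsHenselianVF w (⊥ : IntermediateField K Ω))
    (W : IntermediateField K Ω)
    -- `(W|K,ν)` is a nontrivial maximal purely wild extension with `W|K` separable:
    (hmax : MaxPurelyWild w p ⊥ W) (hnt : W ≠ ⊥)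
    (hsep : ∀ x ∈ W, IsSeparable K x) :
    PerfectField K ∧
    ∀ M : IntermediateField K Ω, (MaxPurelyWild w p ⊥ M ↔ MaxImmediateAlg w ⊥ M) := by
  haveI := Fact.mk hp
  haveI : CharP Ω p := charP_of_injective_algebraMap (algebraMap K Ω).injective p
  haveI : IsAlgClosed Ω := IsAlgClosure.isAlgClosed (R := K)
  have hpk : ∀ k : ℕ, p ^ k ≠ 0 := fun k => pow_ne_zero k hp.ne_zero
  -- the Frobenius preimage of `W`
  let S : IntermediateField K Ω :=
    Subfield.toIntermediateField (W.toSubfield.comap (frobenius Ω p)) (fun r => by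
      show frobenius Ω p (algebraMap K Ω r) ∈ W.toSubfield
      rw [frobenius_def, ← map_pow]
      exact W.algebraMap_mem _)
  have hmemS : ∀ z : Ω, z ∈ S ↔ z ^ p ∈ W := fun z => Iff.rfl
  have hWS : W ≤ S := fun z hz => (hmemS z).mpr (pow_mem hz p)
  have hSwild : PurelyWild w p ⊥ S := by
    refine ⟨bot_le, fun x _ => aux_algOver x, ?_, ?_⟩
    · intro x hx hx0
      obtain ⟨k, y, hyW, hy0, hwy⟩ := hmax.1.val (x ^ p) ((hmemS x).mp hx) (pow_ne_zero p hx0)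
      refine ⟨k + 1, y, hyW, hy0, ?_⟩
      rw [hwy, map_pow, ← pow_mul, ← pow_succ']
    · intro x hx hx1
      have h1 : w (x ^ p) ≤ 1 := by
        rw [map_pow]; exact pow_le_one₀ zero_le' hx1
      obtain ⟨k, hres⟩ := hmax.1.res (x ^ p) ((hmemS x).mp hx) h1
      refine ⟨k + 1, ?_⟩
      rwa [← pow_mul, ← pow_succ'] at hres
  have hfrob : ∀ z : Ω, z ^ p ∈ W → z ∈ W := by
    intro z hz
    have hSW : S = W := hmax.2 S hSwild hWS
    rw [← hSW]
    exact (hmemS z).mpr hz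
  -- K admits p-th roots
  have proot : ∀ a : K, ∃ b : K, b ^ p = a := by
    intro a
    obtain ⟨β, hβ⟩ := IsAlgClosed.exists_pow_nat_eq (algebraMap K Ω a) hp.pos
    have hβW : β ∈ W := hfrob β (by rw [hβ]; exact W.algebraMap_mem a)
    exact aux_sep_root p hp β a hβ (hsep β hβW)
  have prootk : ∀ (k : ℕ) (a : K), ∃ b : K, b ^ p ^ k = a := by
    intro k
    induction k with
    | zero => exact fun a => ⟨a, by simp⟩
    | succ k ih =>
      intro a
      obtain ⟨b, hb⟩ := ih a
      obtain ⟨c, hc⟩ := proot b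
      exact ⟨c, by rw [pow_succ', pow_mul, hc, hb]⟩
  have hperf : PerfectField K := by
    haveI : PerfectRing K p := PerfectRing.ofSurjective K p (fun a => by
      obtain ⟨b, hb⟩ := proot a
      exact ⟨b, by rwa [frobenius_def]⟩)
    exact PerfectRing.toPerfectField K p
  -- purely wild over ⊥ ↔ immediate algebraic over ⊥
  have hiff : ∀ L : IntermediateField K Ω,
      PurelyWild w p ⊥ L ↔ ImmediateAlg w ⊥ L := by
    intro L
    constructor
    · intro h
      refine ⟨⟨h.le, ?_, ?_⟩, h.alg⟩
      · intro x hxL hx0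
        obtain ⟨k, y, hy, hy0, hwy⟩ := h.val x hxL hx0
        obtain ⟨c, hc⟩ := IntermediateField.mem_bot.mp hy
        obtain ⟨b, hb⟩ := prootk k c
        refine ⟨algebraMap K Ω b, IntermediateField.mem_bot.mpr ⟨b, rfl⟩, ?_, ?_⟩
        · intro h0
          apply hy0
          rw [← hc, ← hb, map_pow, h0, zero_pow (hpk k)]
        · apply aux_pow_eq_cancel (hpk k)
          rw [← map_pow, ← map_pow, hb, hc, hwy]
      · intro x hxL hx1
        obtain ⟨k, y, hy, hwy1, hwlt⟩ := h.res x hxL hx1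
        obtain ⟨c, hc⟩ := IntermediateField.mem_bot.mp hy
        obtain ⟨b, hb⟩ := prootk k c
        have hyk : (algebraMap K Ω b) ^ p ^ k = y := by rw [← map_pow, hb, hc]
        refine ⟨algebraMap K Ω b, IntermediateField.mem_bot.mpr ⟨b, rfl⟩, ?_, ?_⟩
        · apply aux_le_one_of_pow (hpk k)
          rw [← map_pow, hyk]
          exact hwy1
        · apply aux_lt_one_of_pow (hpk k)
          rw [← map_pow, sub_pow_char_pow, hyk]
          exact hwlt
    · intro h
      refine ⟨h.1.le, h.2, ?_, ?_⟩
      · intro x hxL hx0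
        exact ⟨0, by simpa using h.1.val x hxL hx0⟩
      · intro x hxL hx1
        exact ⟨0, by simpa using h.1.res x hxL hx1⟩
  refine ⟨hperf, fun M => ?_⟩
  constructor
  · rintro ⟨h1, h2⟩
    exact ⟨(hiff M).mp h1, fun W' hW' hle => h2 W' ((hiff W').mpr hW') hle⟩
  · rintro ⟨h1, h2⟩
    exact ⟨(hiff M).mpr h1, fun W' hW' hle => h2 W' ((hiff W').mp hW') hle⟩
end

section
/- Let (K,ν) be a henselian valued field with char K = 0 and char Kν = p > 0 that contains a primitive p-th root of unity. Let K(θ)|K be a Kummer extension with νθ = 0. Then every element of ν(θ−K) is ≤ (ν p)/(p−1). -/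
open Polynomial IntermediateField

open ValWild Polynomial IntermediateField


section KVBAux

variable {K Ω Γ₀ : Type*} [Field K] [Field Ω] [Algebra K Ω]
  [LinearOrderedCommGroupWithZero Γ₀]

theorem KVB.val_natCast_le_one (w : Valuation Ω Γ₀) (n : ℕ) : w (n : Ω) ≤ 1 := by
  induction n with
  | zero => simp
  | succ n ih =>
      push_cast
      exact le_trans (w.map_add _ _) (max_le ih (le_of_eq w.map_one))

theorem KVB.val_one_sub_pow_le (w : Valuation Ω Γ₀) {u : Ω} (hu : w u ≤ 1) (k : ℕ) :
    w (1 - u ^ k) ≤ w (1 - u) := by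
  have hgeom : 1 - u ^ k = (1 - u) * ∑ i ∈ Finset.range k, u ^ i := by
    have h := geom_sum_mul u k
    linear_combination h
  rw [hgeom, w.map_mul]
  calc w (1 - u) * w (∑ i ∈ Finset.range k, u ^ i)
      ≤ w (1 - u) * 1 :=
        mul_le_mul_right (w.map_sum_le fun i _ => by
          rw [w.map_pow]; exact pow_le_one' hu i) _
    _ = w (1 - u) := mul_one _

theorem KVB.div_le_one' {a b : Γ₀} (hb : b ≠ 0) (h : a ≤ b) : a / b ≤ 1 := by
  rw [div_eq_mul_inv]
  calc a * b⁻¹ ≤ b * b⁻¹ := mul_le_mul_left h _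
    _ = 1 := mul_inv_cancel₀ hb

theorem KVB.div_lt_one' {a b : Γ₀} (hb : b ≠ 0) (h : a < b) : a / b < 1 := by
  rw [div_eq_mul_inv, mul_comm]
  have h2 : b⁻¹ * a < b⁻¹ * b := mul_lt_mul_of_pos_left h (zero_lt_iff.mpr (inv_ne_zero hb))
  rwa [inv_mul_cancel₀ hb] at h2

theorem KVB.isUnit_int {F : Type*} [Field F] (v : Valuation F Γ₀) (x : v.integer)
    (h : v (x : F) = 1) : IsUnit x := by
  have hx0 : (x : F) ≠ 0 := by
    intro h0; rw [h0, v.map_zero] at h; exact zero_ne_one h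
  have hinv : ((x : F)⁻¹) ∈ v.integer := by
    have : v ((x : F)⁻¹) ≤ 1 := by rw [map_inv₀, h]; simp
    exact this
  exact IsUnit.of_mul_eq_one (a := x) ⟨_, hinv⟩ (Subtype.ext (mul_inv_cancel₀ hx0))

theorem KVB.mem_max {F : Type*} [Field F] (v : Valuation F Γ₀) [IsLocalRing v.integer]
    (x : v.integer) (h : v (x : F) < 1) : x ∈ IsLocalRing.maximalIdeal v.integer := by
  rw [IsLocalRing.mem_maximalIdeal, mem_nonunits_iff]
  intro hu
  obtain ⟨y, hy⟩ := hu.exists_right_inv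
  have h1 := congrArg (fun t : v.integer => (t : F)) hy
  simp only [Subring.coe_mul, OneMemClass.coe_one] at h1
  have h2 := congrArg v h1
  rw [v.map_mul, v.map_one] at h2
  have hyle : v (y : F) ≤ 1 := y.2
  have h3 : v (x : F) * v (y : F) < 1 := by
    calc v (x : F) * v (y : F) ≤ v (x : F) * 1 := mul_le_mul_right hyle _
      _ < 1 := by rwa [mul_one]
  rw [h2] at h3
  exact lt_irrefl _ h3

theorem KVB.hensel_root {F : Type*} [Field F] (v : Valuation F Γ₀)
    (hh : HenselianLocalRing v.integer)
    (n : ℕ) (hn : n ≠ 0) (κ : ℕ → F) (hκ : ∀ k, k < n+1 → v (κ k) ≤ 1)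
    (hκ0 : v (κ 0) < 1) (hκ1 : v (κ 1) = 1) :
    ∃ Y : F, v Y ≤ 1 ∧ Y ^ (n+1) + ∑ k ∈ Finset.range (n+1), κ k * Y ^ k = 0 := by
  haveI := hh
  set r : ℕ → v.integer := fun k => if hk : k < n+1 then ⟨κ k, hκ k hk⟩ else 0 with hrdef
  have hrc : ∀ k, k < n+1 → ((r k : F)) = κ k := by
    intro k hk; simp only [hrdef, dif_pos hk]
  set G : Polynomial v.integer := X ^ (n+1) + ∑ k ∈ Finset.range (n+1), C (r k) * X ^ k
    with hGdef
  have hGmonic : G.Monic := by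
    apply monic_X_pow_add
    apply lt_of_le_of_lt (degree_sum_le _ _)
    rw [Finset.sup_lt_iff (by exact_mod_cast WithBot.bot_lt_coe (n+1))]
    intro k hk
    apply lt_of_le_of_lt (degree_C_mul_X_pow_le _ _)
    exact_mod_cast Finset.mem_range.mp hk
  have hG0 : G.eval 0 = r 0 := by
    rw [hGdef, eval_add, eval_pow, eval_X, zero_pow (Nat.succ_ne_zero n), eval_finset_sum]
    rw [Finset.sum_eq_single_of_mem 0 (Finset.mem_range.mpr (Nat.succ_pos n))
      (fun k _ hk0 => by rw [eval_mul, eval_C, eval_pow, eval_X, zero_pow hk0, mul_zero])]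
    rw [pow_zero, mul_one, eval_C, zero_add]
  have hG1 : G.derivative.eval 0 = r 1 := by
    rw [hGdef, derivative_add, derivative_X_pow, derivative_sum]
    rw [eval_add, eval_mul, eval_C, eval_pow, eval_X, zero_pow (show n+1-1 ≠ 0 by omega), mul_zero, zero_add,
      eval_finset_sum]
    rw [Finset.sum_eq_single_of_mem 1 (Finset.mem_range.mpr (by omega))
      (fun k _ hk1 => by
        rcases Nat.eq_zero_or_pos k with rfl | hkpos
        · rw [derivative_C_mul_X_pow, Nat.cast_zero, mul_zero, map_zero, zero_mul, eval_zero]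
        · have hk2 : k - 1 ≠ 0 := by omega
          rw [derivative_C_mul_X_pow, eval_mul, eval_pow, eval_X, zero_pow hk2, mul_zero])]
    rw [derivative_C_mul_X_pow, Nat.sub_self, pow_zero, mul_one, eval_C, Nat.cast_one, mul_one]
  obtain ⟨y, hy, -⟩ := hh.is_henselian G hGmonic 0
    (by rw [hG0]
        apply KVB.mem_max v
        rw [hrc 0 (Nat.succ_pos n)]
        exact hκ0)
    (by rw [hG1]
        apply KVB.isUnit_int v
        rw [hrc 1 (by omega)]
        exact hκ1)
  refine ⟨(y : F), y.2, ?_⟩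
  have h0 : y ^ (n+1) + ∑ k ∈ Finset.range (n+1), r k * y ^ k = 0 := by
    have h6 : G.eval y = 0 := hy
    rw [hGdef, eval_add, eval_pow, eval_X, eval_finset_sum] at h6
    simpa only [eval_mul, eval_C, eval_pow, eval_X] using h6
  have h1 := congrArg (v.integer.subtype) h0
  rw [map_add, map_pow, map_sum, map_zero] at h1
  rw [← h1]
  congr 1
  refine Finset.sum_congr rfl fun k hk => ?_
  rw [map_mul, map_pow]
  show κ k * (y : F) ^ k = (r k : F) * (y : F) ^ k
  rw [hrc k (Finset.mem_range.mp hk)]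

end KVBAux
/-- Lemma: value-group bound for Kummer extensions.  Additively,
`ν(θ-K) ≤ νp/(p-1)`; multiplicatively, `w p ≤ w (θ - c) ^ (p - 1)` for every `c ∈ K`. -/
theorem kummer_extension_value_bound
    {K Ω Γ₀ : Type*} [Field K] [Field Ω] [Algebra K Ω]
    [LinearOrderedCommGroupWithZero Γ₀] [CharZero K]
    (w : Valuation Ω Γ₀) (p : ℕ) (hp : p.Prime)
    -- the residue field has characteristic `p`:
    (hresc : w ((p : ℕ) : Ω) < 1)
    (hhens : IsHenselianVF w (⊥ : IntermediateField K Ω))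
    -- `K` contains a primitive `p`-th root of unity:
    (ζ : K) (hζ : IsPrimitiveRoot ζ p)
    (θ : Ω) (a : K)
    -- `K(θ)|K` is a Kummer extension, i.e. `θ^p = a ∈ K` and `θ ∉ K`:
    (hKum : θ ^ p = algebraMap K Ω a)
    (hnotin : θ ∉ (⊥ : IntermediateField K Ω))
    -- `νθ = 0`:
    (hθ : w θ = 1) :
    ∀ c : K, w ((p : ℕ) : Ω) ≤ w (θ - algebraMap K Ω c) ^ (p - 1) := by
  intro c
  by_contra hcon0
  have hcon : w (θ - algebraMap K Ω c) ^ (p - 1) < w ((p : ℕ) : Ω) := lt_of_not_ge hcon0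
  clear hcon0
  obtain ⟨q, rfl⟩ : ∃ q, p = q + 1 := ⟨p - 1, (Nat.succ_pred_eq_of_pos hp.pos).symm⟩
  have hq0 : q ≠ 0 := by rintro rfl; exact Nat.not_prime_one hp
  set ι := algebraMap K Ω with hidef
  have hinj : Function.Injective ι := ι.injective
  set ε := θ - ι c with hεdef
  -- basic values
  have wζ : w (ι ζ) = 1 := by
    refine (pow_eq_one_iff_left (Nat.succ_ne_zero q)).mp ?_
    rw [← w.map_pow, ← map_pow, hζ.pow_eq_one, map_one, w.map_one]
  set lam := ζ - 1 with hlamdef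
  have hlamne : lam ≠ 0 := sub_ne_zero.mpr (hζ.ne_one hp.one_lt)
  have hιlamne : ι lam ≠ 0 := fun h => hlamne (hinj (by rw [h, map_zero]))
  set L := w (ι lam) with hLdef
  have hLne : L ≠ 0 := w.ne_zero_iff.mpr hιlamne
  -- the product formula : L ^ q = w (ι (q+1 : ℕ))
  haveI : Fact (Nat.Prime (q+1)) := ⟨hp⟩
  haveI : NeZero (q+1) := ⟨Nat.succ_ne_zero q⟩
  have hcyc : ((q+1 : ℕ) : K) = ∏ μ ∈ primitiveRoots (q+1) K, (1 - μ) := by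
    have h1 := Polynomial.eval_one_cyclotomic_prime (R := K) (p := q+1)
    rw [Polynomial.cyclotomic_eq_prod_X_sub_primitiveRoots hζ] at h1
    simpa [Polynomial.eval_prod] using h1.symm
  have hLζ : L = w (ι (1 - ζ)) := by
    have h1 : ι lam = -ι (1 - ζ) := by
      rw [hlamdef, map_sub, map_sub, map_one]; ring
    rw [hLdef, h1, w.map_neg]
  have hfac : ∀ μ ∈ primitiveRoots (q+1) K, w (ι (1 - μ)) = L := by
    intro μ hμ
    rw [mem_primitiveRoots (Nat.succ_pos q)] at hμ
    obtain ⟨i, -, hi⟩ := hζ.eq_pow_of_pow_eq_one hμ.pow_eq_one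
    obtain ⟨j, -, hj⟩ := hμ.eq_pow_of_pow_eq_one hζ.pow_eq_one
    have wμ : w (ι μ) = 1 := by
      refine (pow_eq_one_iff_left (Nat.succ_ne_zero q)).mp ?_
      rw [← w.map_pow, ← map_pow, hμ.pow_eq_one, map_one, w.map_one]
    have eζ : ι (1 - ζ) = 1 - ι ζ := by rw [map_sub, map_one]
    have eμ : ι (1 - μ) = 1 - ι μ := by rw [map_sub, map_one]
    refine le_antisymm ?_ ?_
    · have e1 : ι (1 - ζ ^ i) = 1 - ι ζ ^ i := by rw [map_sub, map_one, map_pow]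
      rw [hLζ, ← hi, e1, eζ]
      exact KVB.val_one_sub_pow_le w (le_of_eq wζ) i
    · have e1 : ι (1 - μ ^ j) = 1 - ι μ ^ j := by rw [map_sub, map_one, map_pow]
      rw [hLζ, ← hj, e1, eμ]
      exact KVB.val_one_sub_pow_le w (le_of_eq wμ) j
  have hLP : L ^ q = w (ι ((q+1 : ℕ) : K)) := by
    have h2 : w (ι ((q+1:ℕ) : K)) = ∏ μ ∈ primitiveRoots (q+1) K, w (ι (1-μ)) := by
      rw [hcyc, map_prod, map_prod]
    rw [h2, Finset.prod_congr rfl hfac, Finset.prod_const, hζ.card_primitiveRoots,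
      Nat.totient_prime hp, Nat.add_sub_cancel]
  have hwP : w (ι ((q+1:ℕ):K)) < 1 := by rw [map_natCast]; exact hresc
  have hconι : w ε ^ q < w (ι ((q+1:ℕ):K)) := by rw [map_natCast]; exact hcon
  have hL1 : L < 1 := (pow_lt_one_iff hq0).mp (by rw [hLP]; exact hwP)
  have hεL : w ε < L := by
    by_contra hcontra
    push_neg at hcontra
    have h3 := pow_le_pow_left' hcontra q
    rw [hLP] at h3
    exact absurd (lt_of_le_of_lt h3 hconι) (lt_irrefl _)
  have hε1 : w ε < 1 := hεL.trans hL1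
  have hwc : w (ι c) = 1 := by
    have hιc : ι c = θ - ε := by rw [hεdef]; ring
    have hle : w (ι c) ≤ 1 := by
      rw [hιc]
      exact le_trans (w.map_sub θ ε) (max_le (le_of_eq hθ) hε1.le)
    rcases lt_or_eq_of_le hle with hlt | heq
    · exfalso
      have h4 : w θ ≤ max (w (ι c)) (w ε) := by
        have h5 : θ = ι c + ε := by rw [hεdef]; ring
        rw [h5]; exact w.map_add _ _
      rw [hθ] at h4
      exact lt_irrefl _ (lt_of_le_of_lt h4 (max_lt hlt hε1))
    · exact heq
  have hcne : c ≠ 0 := by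
    intro h; rw [h, map_zero, w.map_zero] at hwc; exact zero_ne_one hwc
  set b := a / c ^ (q+1) with hbdef
  have hP0 : w (ι ((q+1:ℕ):K)) ≠ 0 := by rw [← hLP]; exact pow_ne_zero _ hLne
  -- bound on θ^(q+1) - (ι c)^(q+1)
  have hsub : w (θ ^ (q+1) - ι c ^ (q+1)) ≤ w (ι ((q+1:ℕ):K)) * w ε := by
    have hθpow : θ ^ (q+1) - ι c ^ (q+1) =
        ∑ j ∈ Finset.range (q+1), ε ^ (j+1) * ι c ^ (q + 1 - (j+1)) * ((q+1).choose (j+1) : Ω) := by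
      have h1 : θ = ε + ι c := by rw [hεdef]; ring
      rw [h1, add_pow, Finset.sum_range_succ']
      simp only [pow_zero, Nat.choose_zero_right, Nat.cast_one, one_mul, mul_one, Nat.sub_zero]
      ring
    rw [hθpow]
    apply w.map_sum_le
    intro j hj
    rw [w.map_mul, w.map_mul, w.map_pow, w.map_pow, hwc, one_pow, mul_one]
    have hεpow : w ε ^ (j+1) ≤ w ε := by
      calc w ε ^ (j+1) = w ε ^ j * w ε := pow_succ _ j
        _ ≤ 1 * w ε := mul_le_mul_left (pow_le_one' hε1.le j) _
        _ = w ε := one_mul _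
    rcases Nat.lt_or_ge j q with hjq | hjq
    · obtain ⟨m, hm⟩ := hp.dvd_choose_self (Nat.succ_ne_zero j) (by omega)
      have hCm : (((q+1).choose (j+1) : ℕ) : Ω) = ι ((q+1:ℕ):K) * (m : Ω) := by
        rw [hm, Nat.cast_mul, map_natCast]
      rw [hCm, w.map_mul]
      calc w ε ^ (j+1) * (w (ι ((q+1:ℕ):K)) * w ((m : Ω)))
          ≤ w ε ^ (j+1) * (w (ι ((q+1:ℕ):K)) * 1) :=
            mul_le_mul_right (mul_le_mul_right (KVB.val_natCast_le_one w m) _) _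
        _ = w (ι ((q+1:ℕ):K)) * w ε ^ (j+1) := by rw [mul_one, mul_comm]
        _ ≤ w (ι ((q+1:ℕ):K)) * w ε := mul_le_mul_right hεpow _
    · have hjq' : q = j := by have := Finset.mem_range.mp hj; omega
      subst hjq'
      rw [Nat.choose_self, Nat.cast_one, w.map_one, mul_one]
      calc w ε ^ (q+1) = w ε ^ q * w ε := pow_succ _ q
        _ ≤ w (ι ((q+1:ℕ):K)) * w ε := mul_le_mul_left hconι.le _
  have h1b : w (ι (1 - b)) ≤ w (ι ((q+1:ℕ):K)) * w ε := by
    have e1 : ι (1 - b) * ι c ^ (q+1) = ι c ^ (q+1) - θ ^ (q+1) := by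
      rw [hKum, ← map_pow, ← map_mul, ← map_sub]
      congr 1
      rw [hbdef, sub_mul, div_mul_cancel₀ _ (pow_ne_zero _ hcne), one_mul]
    have e2 : w (ι (1 - b)) = w (ι c ^ (q+1) - θ ^ (q+1)) := by
      rw [← e1, w.map_mul, w.map_pow, hwc, one_pow, mul_one]
    rw [e2, w.map_sub_swap]
    exact hsub
  -- the coefficients
  set κ : ℕ → K := fun k => if k = 0 then (1 - b) / lam ^ (q+1)
    else ((q+1).choose k : K) * lam ^ k / lam ^ (q+1) with hκdef
  have hκ0val : κ 0 = (1 - b) / lam ^ (q+1) := by simp [hκdef]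
  have hκsval : ∀ j : ℕ, κ (j+1) = ((q+1).choose (j+1) : K) * lam ^ (j+1) / lam ^ (q+1) := by
    intro j; simp [hκdef]
  have hκ0 : w (ι (κ 0)) < 1 := by
    rw [hκ0val, map_div₀, map_pow, map_div₀, w.map_pow]
    apply KVB.div_lt_one' (pow_ne_zero _ hLne)
    apply lt_of_le_of_lt h1b
    rw [← hLP, pow_succ]
    exact mul_lt_mul_of_pos_left hεL (zero_lt_iff.mpr (pow_ne_zero q hLne))
  have hκ1 : w (ι (κ 1)) = 1 := by
    have h5 : κ 1 = ((q+1 : ℕ) : K) * lam / lam ^ (q+1) := by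
      rw [hκsval 0, Nat.choose_one_right, pow_one]
    rw [h5, map_div₀, map_mul, map_pow, map_div₀, w.map_mul, w.map_pow]
    rw [← hLP, ← pow_succ]
    exact div_self (pow_ne_zero _ hLne)
  have hκk : ∀ k, k < q+1 → w (ι (κ k)) ≤ 1 := by
    intro k hk
    rcases Nat.eq_zero_or_pos k with rfl | hkpos
    · exact hκ0.le
    obtain ⟨j, rfl⟩ : ∃ j, k = j + 1 := ⟨k-1, by omega⟩
    rw [hκsval j, map_div₀, map_mul, map_pow, map_pow, map_div₀, w.map_mul, w.map_pow, w.map_pow]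
    apply KVB.div_le_one' (pow_ne_zero _ hLne)
    have hC : w (ι (((q+1).choose (j+1) : ℕ) : K)) ≤ w (ι ((q+1:ℕ):K)) := by
      obtain ⟨m, hm⟩ := hp.dvd_choose_self (Nat.succ_ne_zero j) (by omega)
      rw [hm, Nat.cast_mul, map_mul, w.map_mul]
      calc w (ι ((q+1:ℕ):K)) * w (ι ((m:ℕ):K)) ≤ w (ι ((q+1:ℕ):K)) * 1 := by
            apply mul_le_mul_right
            rw [map_natCast]
            exact KVB.val_natCast_le_one w m
        _ = w (ι ((q+1:ℕ):K)) := mul_one _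
    calc w (ι (((q+1).choose (j+1) : ℕ) : K)) * L ^ (j+1)
        ≤ w (ι ((q+1:ℕ):K)) * L ^ (j+1) := mul_le_mul_left hC _
      _ = L ^ q * L ^ (j+1) := by rw [hLP]
      _ = L ^ (q+1) * L ^ j := by rw [← pow_add, ← pow_add]; congr 1; omega
      _ ≤ L ^ (q+1) * 1 := mul_le_mul_right (pow_le_one' hL1.le j) _
      _ = L ^ (q+1) := mul_one _
  -- apply Hensel's lemma over (⊥, w)
  have hhens' : HenselianLocalRing
      ((w.comap (algebraMap (⊥ : IntermediateField K Ω) Ω)).integer) := hhens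
  obtain ⟨Y0, hY0le, hY0eq⟩ := KVB.hensel_root (w.comap (algebraMap (⊥ : IntermediateField K Ω) Ω))
    hhens' q hq0 (fun k => ⟨ι (κ k), IntermediateField.algebraMap_mem ⊥ (κ k)⟩)
    (fun k hk => hκk k hk) hκ0 hκ1
  set Y : Ω := (Y0 : Ω) with hYdef
  have hYle : w Y ≤ 1 := hY0le
  have hYmem : Y ∈ (⊥ : IntermediateField K Ω) := Y0.2
  have hEval : Y ^ (q+1) + ∑ k ∈ Finset.range (q+1), ι (κ k) * Y ^ k = 0 := by
    have h1 := congrArg (algebraMap (⊥ : IntermediateField K Ω) Ω) hY0eq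
    rw [map_add, map_pow, map_sum, map_zero] at h1
    rw [← h1]
    congr 1
  -- the algebraic identity : (1 + x)^(q+1) = ι b
  set x : Ω := ι lam * Y with hxdef
  have hx1 : w x < 1 := by
    rw [hxdef, w.map_mul]
    calc L * w Y ≤ L * 1 := mul_le_mul_right hYle _
      _ = L := mul_one _
      _ < 1 := hL1
  have claim1 : (1 + x) ^ (q+1) = ∑ k ∈ Finset.range (q+2), x ^ k * ((q+1).choose k : Ω) := by
    rw [add_comm, add_pow]
    simp only [one_pow, mul_one]
  have key : (1 + x) ^ (q+1) = ι b := by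
    have hterm : ∀ j ∈ Finset.range q,
        ι lam ^ (q+1) * (ι (κ (j+1)) * Y ^ (j+1)) = x ^ (j+1) * ((q+1).choose (j+1) : Ω) := by
      intro j hj
      rw [hκsval j, map_div₀, map_mul, map_pow, map_pow, map_natCast, hxdef, mul_pow]
      field_simp
    have hκ0' : ι lam ^ (q+1) * (ι (κ 0) * Y ^ 0) = 1 - ι b := by
      rw [pow_zero, mul_one, hκ0val, map_div₀, map_pow, mul_comm,
        div_mul_cancel₀ _ (pow_ne_zero _ hιlamne), map_sub, map_one]
    have h3 := congrArg (fun t => ι lam ^ (q+1) * t) hEval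
    simp only [mul_zero, mul_add, Finset.mul_sum] at h3
    rw [Finset.sum_range_succ'] at h3
    rw [Finset.sum_congr rfl hterm, hκ0', ← mul_pow] at h3
    rw [claim1, Finset.sum_range_succ, Finset.sum_range_succ']
    rw [Nat.choose_self, Nat.cast_one, mul_one, pow_zero, Nat.choose_zero_right,
      Nat.cast_one, one_mul]
    rw [hxdef] at h3 ⊢
    linear_combination h3
  -- conclude θ ∈ ⊥
  have hcb : ι c ^ (q+1) * ι b = ι a := by
    rw [← map_pow, ← map_mul]
    congr 1
    rw [hbdef]
    field_simp
  have hne : (1 : Ω) + x ≠ 0 := by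
    intro h0
    have h7 : w ((1 : Ω) + x) = 0 := by rw [h0, w.map_zero]
    have h8 : (1:Γ₀) ≤ max (w (1 + x)) (w x) := by
      calc (1:Γ₀) = w 1 := w.map_one.symm
        _ = w ((1 + x) - x) := by rw [add_sub_cancel_right]
        _ ≤ max (w (1+x)) (w x) := w.map_sub _ _
    rw [h7, max_eq_right zero_le'] at h8
    exact lt_irrefl _ (lt_of_le_of_lt h8 hx1)
  have hιcne : ι c ≠ 0 := fun h => hcne (hinj (by rw [h, map_zero]))
  have hzne : ι c * (1 + x) ≠ 0 := mul_ne_zero hιcne hne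
  have hzp : (ι c * (1 + x)) ^ (q+1) = θ ^ (q+1) := by
    rw [mul_pow, key, hcb, ← hKum]
  have hdiv : (θ / (ι c * (1 + x))) ^ (q+1) = 1 := by
    rw [div_pow, ← hzp, div_self (pow_ne_zero _ hzne)]
  obtain ⟨i, -, hiθ⟩ := (hζ.map_of_injective hinj).eq_pow_of_pow_eq_one hdiv
  refine hnotin ?_
  have hθrep : θ = ι (ζ ^ i * c) + ι (ζ ^ i * c * lam) * Y := by
    have h4 : θ = ι ζ ^ i * (ι c * (1 + x)) := by
      rw [hiθ, div_mul_cancel₀ _ hzne]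
    rw [h4, hxdef, map_mul, map_mul, map_mul, map_pow]
    ring
  rw [hθrep]
  exact add_mem (IntermediateField.algebraMap_mem ⊥ _)
    (mul_mem (IntermediateField.algebraMap_mem ⊥ _) hYmem)
end

section
/- Let (K(θ)|K,ν) be an extension of valued fields, and set Λ := ν(θ−K) ∩ νK. Then either ν(θ−K) = Λ, or ν(θ−K) = Λ ∪ {γ} for a single element γ with γ > λ for every λ ∈ Λ (and γ ∉ νK). -/
open Polynomial IntermediateField

open ValWild Polynomial IntermediateField

/-- Lemma: the set `ν(θ-K)` either lies in `νK`, or is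
`Λ ∪ {γ}` with `γ ∉ νK` greater than every element of `Λ = ν(θ-K) ∩ νK`.
Note that the additive order on values corresponds to the *reversed*
multiplicative order: `γ > λ` additively means `γ < λ` for the multiplicative
values below. -/
theorem value_set_of_generator_dichotomy
    {K Ω Γ₀ : Type*} [Field K] [Field Ω] [Algebra K Ω]
    [LinearOrderedCommGroupWithZero Γ₀]
    (w : Valuation Ω Γ₀) (θ : Ω) :
    -- either every value `ν(θ-c)` lies in `νK` ...
    (∀ c : K, IsValueOn w (⊥ : IntermediateField K Ω) (w (θ - algebraMap K Ω c))) ∨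
    -- ... or there is a single value `γ ∉ νK`, all other values lie in `νK`, and `γ`
    -- is (additively) greater than all of them:
    (∃ γ : Γ₀, (∃ c : K, w (θ - algebraMap K Ω c) = γ) ∧
      ¬ IsValueOn w (⊥ : IntermediateField K Ω) γ ∧
      (∀ c : K, w (θ - algebraMap K Ω c) = γ ∨
        IsValueOn w (⊥ : IntermediateField K Ω) (w (θ - algebraMap K Ω c))) ∧
      (∀ c : K, w (θ - algebraMap K Ω c) ≠ γ → γ < w (θ - algebraMap K Ω c))) := by
  by_cases h : ∀ c : K, IsValueOn w (⊥ : IntermediateField K Ω) (w (θ - algebraMap K Ω c))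
  · exact Or.inl h
  · push_neg at h
    obtain ⟨c₀, hc₀⟩ := h
    have key : ∀ c : K, w (θ - algebraMap K Ω c) ≠ w (θ - algebraMap K Ω c₀) →
        w (θ - algebraMap K Ω c₀) < w (θ - algebraMap K Ω c) ∧
        IsValueOn w (⊥ : IntermediateField K Ω) (w (θ - algebraMap K Ω c)) := by
      intro c hne
      have hwb : w (algebraMap K Ω c - θ) = w (θ - algebraMap K Ω c) :=
        Valuation.map_sub_swap w _ _
      have hne' : w (θ - algebraMap K Ω c₀) ≠ w (algebraMap K Ω c - θ) := by
        rw [hwb]; exact fun e => hne e.symm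
      have hsum : (θ - algebraMap K Ω c₀) + (algebraMap K Ω c - θ)
          = algebraMap K Ω (c - c₀) := by
        rw [map_sub]; ring
      have hmax : w (algebraMap K Ω (c - c₀))
          = max (w (θ - algebraMap K Ω c₀)) (w (θ - algebraMap K Ω c)) := by
        rw [← hsum, w.map_add_of_distinct_val hne', hwb]
      have hlt : w (θ - algebraMap K Ω c₀) < w (θ - algebraMap K Ω c) := by
        rcases lt_or_ge (w (θ - algebraMap K Ω c₀)) (w (θ - algebraMap K Ω c)) with h1 | h1
        · exact h1
        · exfalso
          have hcc : c ≠ c₀ := fun e => hne (by rw [e])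
          have hz : algebraMap K Ω (c - c₀) ≠ 0 := by
            simpa [sub_eq_zero] using hcc
          exact hc₀ ⟨algebraMap K Ω (c - c₀), IntermediateField.algebraMap_mem _ _, hz,
            by rw [hmax, max_eq_left h1]⟩
      refine ⟨hlt, ⟨algebraMap K Ω (c - c₀), IntermediateField.algebraMap_mem _ _, ?_, ?_⟩⟩
      · have hcc : c ≠ c₀ := fun e => hne (by rw [e])
        simpa [sub_eq_zero] using hcc
      · rw [hmax, max_eq_right hlt.le]
    refine Or.inr ⟨w (θ - algebraMap K Ω c₀), ⟨c₀, rfl⟩, hc₀, ?_, ?_⟩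
    · intro c
      by_cases hc : w (θ - algebraMap K Ω c) = w (θ - algebraMap K Ω c₀)
      · exact Or.inl hc
      · exact Or.inr (key c hc).2
    · intro c hc
      exact (key c hc).1
end
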